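/- For every τ ∈ (0,1), α > 2, β > 0, and every Δ₀ > 0, there exist a constant c > 0 (depending only on α, β, τ) and a finite set R of n ≥ 2 distinct points on the real line whose diversity Δ(R) (the ratio of the maximum to the minimum pairwise distance in R) exceeds Δ₀, such that n ≥ c·log log Δ(R) and every set of links with endpoints in R that is pairwise node-disjoint and P_τ-feasible has size at most 1. Consequently, every partition of the arbitrarily oriented edges of any spanning tree of R into sets that are pairwise node-disjoint and P_τ-feasible has exactly n − 1 ≥ c·log log Δ(R) parts. -/

import Mathlib

noncomputable section

open scoped BigOperators

abbrev Pt : Type := EuclideanSpace ℝ (Fin 2)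

instance : DecidableEq Pt := Classical.decEq _

abbrev Link : Type := Pt × Pt

def len (i : Link) : ℝ := dist i.1 i.2

def dd (i j : Link) : ℝ :=
  min (min (dist i.1 j.1) (dist i.1 j.2)) (min (dist i.2 j.1) (dist i.2 j.2))

def PFeasible (α β : ℝ) (S : Finset Link) (P : Link → ℝ) : Prop :=
  (∀ i ∈ S, 0 < P i) ∧
  ∀ i ∈ S, β * ∑ j ∈ S.erase i, P j / dist j.1 i.2 ^ α ≤ P i / len i ^ α

def Feasible (α β : ℝ) (S : Finset Link) : Prop := ∃ P, PFeasible α β S P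

def oblPower (α τ : ℝ) : Link → ℝ := fun i => len i ^ (τ * α)

def linkDiversity (S : Finset Link) : ℝ :=
  if h : S.Nonempty then S.sup' h len / S.inf' h len else 1

def logStar (x : ℝ) : ℕ := sInf {k : ℕ | (Real.logb 2)^[k] x ≤ 1}

def IsSpanningTreeLinks (R : Finset Pt) (S : Finset Link) : Prop :=
  (∀ i ∈ S, i.1 ∈ R ∧ i.2 ∈ R ∧ i.1 ≠ i.2) ∧
  S.card + 1 = R.card ∧
  (SimpleGraph.fromRel fun x y : {p : Pt // p ∈ R} => ((x : Pt), (y : Pt)) ∈ S).Connected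

def IsMSTLinks (R : Finset Pt) (S : Finset Link) : Prop :=
  IsSpanningTreeLinks R S ∧
  ∀ S' : Finset Link, IsSpanningTreeLinks R S' → ∑ i ∈ S, len i ≤ ∑ i ∈ S', len i

def emb (t : ℝ) : Pt := (WithLp.equiv 2 (Fin 2 → ℝ)).symm ![t, 0]

def NodeDisjoint (i j : Link) : Prop :=
  i.1 ≠ j.1 ∧ i.1 ≠ j.2 ∧ i.2 ≠ j.1 ∧ i.2 ≠ j.2

def ptDiversity (R : Finset ℝ) : ℝ :=
  if h : R.offDiag.Nonempty then
    (R.offDiag.sup' h fun p => |p.1 - p.2|) / (R.offDiag.inf' h fun p => |p.1 - p.2|)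
  else 1

def G1 (T : Finset Link) : SimpleGraph {i : Link // i ∈ T} :=
  SimpleGraph.fromRel fun i j => dd ↑i ↑j ≤ min (len ↑i) (len ↑j)

-- ===================== auxiliary lemmas =====================

lemma two_pow_aux {γ : ℝ} (hγ0 : 0 < γ) (hγ1 : γ ≤ 1) {p q n : ℕ}
    (hpq : p + 1 ≤ q) (hpn : p + 1 ≤ n) : γ ^ q + γ ^ n ≤ 2 * γ * γ ^ p := by
  have h1 : γ ^ q ≤ γ ^ (p+1) := pow_le_pow_of_le_one hγ0.le hγ1 hpq
  have h2 : γ ^ n ≤ γ ^ (p+1) := pow_le_pow_of_le_one hγ0.le hγ1 hpn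
  have h3 : γ ^ (p+1) = γ ^ p * γ := pow_succ γ p
  nlinarith

lemma expClaim {τ γ : ℝ} (hγ0 : 0 < γ) (hτ : 2*γ ≤ τ) (hτ' : 2*γ ≤ 1 - τ)
    {n a1 a2 a3 a4 : ℕ} (h1 : a1 < n) (h3 : a3 < n)
    (d12 : a1 ≠ a2) (d13 : a1 ≠ a3) (d14 : a1 ≠ a4) (d23 : a2 ≠ a3)
    (d24 : a2 ≠ a4) (d34 : a3 ≠ a4) :
    γ ^ (min a3 a2) + γ ^ n ≤ τ * γ ^ (min a3 a4) + (1-τ) * γ ^ (min a1 a2) ∨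
    γ ^ (min a1 a4) + γ ^ n ≤ τ * γ ^ (min a1 a2) + (1-τ) * γ ^ (min a3 a4) := by
  have hγ1 : γ ≤ 1 := by linarith
  have hτ0 : (0:ℝ) ≤ τ := by linarith
  have hτ1 : (0:ℝ) ≤ 1 - τ := by linarith
  set mi := min a1 a2 with hmi
  set mj := min a3 a4 with hmj
  have hne : mi ≠ mj := by omega
  have pw : ∀ k : ℕ, (0:ℝ) ≤ γ ^ k := fun k => pow_nonneg hγ0.le k
  rcases lt_or_gt_of_ne hne with h | h
  · rcases Nat.lt_or_ge mi (min a3 a2) with hq | hq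
    · left
      have key := two_pow_aux hγ0 hγ1 (show mi + 1 ≤ min a3 a2 by omega)
        (show mi + 1 ≤ n by omega)
      nlinarith [mul_nonneg hτ0 (pw mj), mul_le_mul_of_nonneg_right hτ' (pw mi)]
    · right
      have hq2 : mi + 1 ≤ min a1 a4 := by omega
      have key := two_pow_aux hγ0 hγ1 hq2 (show mi + 1 ≤ n by omega)
      nlinarith [mul_nonneg hτ1 (pw mj), mul_le_mul_of_nonneg_right hτ (pw mi)]
  · rcases Nat.lt_or_ge mj (min a1 a4) with hq | hq
    · right
      have key := two_pow_aux hγ0 hγ1 (show mj + 1 ≤ min a1 a4 by omega)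
        (show mj + 1 ≤ n by omega)
      nlinarith [mul_nonneg hτ0 (pw mi), mul_le_mul_of_nonneg_right hτ' (pw mj)]
    · left
      have hq2 : mj + 1 ≤ min a3 a2 := by omega
      have key := two_pow_aux hγ0 hγ1 hq2 (show mj + 1 ≤ n by omega)
      nlinarith [mul_nonneg hτ1 (pw mi), mul_le_mul_of_nonneg_right hτ (pw mj)]

/-- gap sizes -/
def gp (G γ : ℝ) (k : ℕ) : ℝ := G ^ (γ ^ k)

/-- point positions -/
def xp (G γ : ℝ) (k : ℕ) : ℝ := ∑ m ∈ Finset.range k, gp G γ m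

section Gaps
variable {G γ : ℝ} {n : ℕ}
variable (hγ0 : 0 < γ) (hγ4 : γ ≤ 1/4) (hG1 : 1 ≤ G) (hM2 : 2 ≤ G ^ (γ ^ n))

include hG1 in
lemma gp_pos (k : ℕ) : 0 < gp G γ k := Real.rpow_pos_of_pos (by linarith) _

include hγ0 hG1 in
lemma gp_one_le (k : ℕ) : 1 ≤ gp G γ k :=
  Real.one_le_rpow hG1 (pow_nonneg hγ0.le k)

include hγ0 hγ4 hG1 in
lemma gp_anti {a b : ℕ} (hab : a ≤ b) : gp G γ b ≤ gp G γ a :=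
  Real.rpow_le_rpow_of_exponent_le hG1
    (pow_le_pow_of_le_one hγ0.le (by linarith) hab)

include hγ0 hγ4 hG1 hM2 in
lemma gp_decay {m : ℕ} (hm : m + 2 ≤ n) : 2 * gp G γ (m+1) ≤ gp G γ m := by
  have hG0 : (0:ℝ) < G := by linarith
  have hexp : γ ^ n ≤ γ ^ m - γ ^ (m+1) := by
    have h1 : γ ^ n ≤ γ ^ (m+2) := pow_le_pow_of_le_one hγ0.le (by linarith) hm
    have h2 : γ ^ (m+2) = γ ^ m * (γ * γ) := by ring
    have h3 : γ ^ (m+1) = γ ^ m * γ := pow_succ γ m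
    have h4 : γ * γ ≤ 1 - γ := by nlinarith
    have h5 : γ ^ m * (γ * γ) ≤ γ ^ m * (1 - γ) :=
      mul_le_mul_of_nonneg_left h4 (pow_nonneg hγ0.le m)
    nlinarith
  have key : gp G γ m = gp G γ (m+1) * G ^ (γ ^ m - γ ^ (m+1)) := by
    rw [gp, gp, ← Real.rpow_add hG0]; ring_nf
  rw [key]
  have h2 : (2:ℝ) ≤ G ^ (γ ^ m - γ ^ (m+1)) :=
    le_trans hM2 (Real.rpow_le_rpow_of_exponent_le hG1 hexp)
  nlinarith [gp_pos hG1 (G := G) (γ := γ) (m+1)]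

include hγ0 hγ4 hG1 hM2 in
lemma sum_Ico_gp : ∀ k a : ℕ, a + k < n →
    ∑ m ∈ Finset.Ico a (a + k + 1), gp G γ m ≤ 2 * gp G γ a := by
  intro k
  induction k with
  | zero => intro a _; simp; nlinarith [gp_pos hG1 (G := G) (γ := γ) a]
  | succ k ih =>
    intro a ha
    rw [Finset.sum_eq_sum_Ico_succ_bot (by omega)]
    have h1 : ∑ m ∈ Finset.Ico (a+1) (a + (k+1) + 1), gp G γ m ≤ 2 * gp G γ (a+1) := by
      have := ih (a+1) (by omega)
      convert this using 3
      omega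
    have h2 : 2 * gp G γ (a+1) ≤ gp G γ a := gp_decay hγ0 hγ4 hG1 hM2 (by omega)
    linarith

include hγ0 hγ4 hG1 hM2 in
lemma xp_sub_le {a b : ℕ} (hab : a < b) (hb : b < n) :
    xp G γ b - xp G γ a ≤ 2 * gp G γ a := by
  have : xp G γ b - xp G γ a = ∑ m ∈ Finset.Ico a b, gp G γ m := by
    rw [xp, xp, Finset.sum_Ico_eq_sub _ hab.le]
  rw [this]
  have := sum_Ico_gp hγ0 hγ4 hG1 hM2 (b - a - 1) a (by omega)
  have hb' : a + (b - a - 1) + 1 = b := by omega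
  rwa [hb'] at this

include hG1 in
lemma xp_sub_ge {a b : ℕ} (hab : a < b) : gp G γ a ≤ xp G γ b - xp G γ a := by
  have : xp G γ b - xp G γ a = ∑ m ∈ Finset.Ico a b, gp G γ m := by
    rw [xp, xp, Finset.sum_Ico_eq_sub _ hab.le]
  rw [this]
  exact Finset.single_le_sum (f := fun m => gp G γ m)
    (fun m _ => (gp_pos hG1 m).le) (Finset.mem_Ico.2 ⟨le_refl a, hab⟩)

include hG1 in
lemma xp_strictMono : StrictMono (xp G γ) := by
  apply strictMono_nat_of_lt_succ
  intro k
  have := xp_sub_ge hG1 (G := G) (γ := γ) (Nat.lt_succ_self k)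
  nlinarith [gp_pos hG1 (G := G) (γ := γ) k]

include hγ0 hγ4 hG1 hM2 in
lemma abs_xp_bounds {a b : ℕ} (hab : a ≠ b) (ha : a < n) (hb : b < n) :
    gp G γ (min a b) ≤ |xp G γ a - xp G γ b| ∧
    |xp G γ a - xp G γ b| ≤ 2 * gp G γ (min a b) := by
  rcases Nat.lt_or_ge a b with h | h
  · have h1 := xp_sub_ge hG1 (G := G) (γ := γ) h
    have h2 := xp_sub_le hγ0 hγ4 hG1 hM2 h hb
    rw [abs_sub_comm, abs_of_nonneg (by linarith), min_eq_left h.le]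
    exact ⟨h1, h2⟩
  · have h' : b < a := by omega
    have h1 := xp_sub_ge hG1 (G := G) (γ := γ) h'
    have h2 := xp_sub_le hγ0 hγ4 hG1 hM2 h' ha
    rw [abs_of_nonneg (by linarith), min_eq_right h'.le]
    exact ⟨h1, h2⟩

end Gaps

lemma keyIneq {G γ τ α β : ℝ} {n : ℕ}
    (hG1 : 1 ≤ G) (hα0 : 0 < α) (hτ0 : 0 < τ) (hτ1 : τ ≤ 1)
    (hβ : 0 < β) (hMβ : (2:ℝ)^α * (2:ℝ)^α < β * (G ^ (γ ^ n)) ^ α)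
    {m1 m2 q : ℕ} (hq : γ^q + γ^n ≤ τ * γ^m2 + (1-τ) * γ^m1)
    {li lj dji : ℝ}
    (hli1 : gp G γ m1 ≤ li) (hli2 : li ≤ 2 * gp G γ m1)
    (hlj : gp G γ m2 ≤ lj) (hd0 : 0 ≤ dji) (hd : dji ≤ 2 * gp G γ q) :
    li ^ (τ*α) * dji ^ α < β * lj ^ (τ*α) * li ^ α := by
  have hG0 : (0:ℝ) < G := by linarith
  have hgp : ∀ k : ℕ, (0:ℝ) < gp G γ k := fun k => Real.rpow_pos_of_pos hG0 _
  have hli0 : (0:ℝ) ≤ li := le_trans (hgp m1).le hli1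
  have hlj0 : (0:ℝ) ≤ lj := le_trans (hgp m2).le hlj
  have hτα : 0 ≤ τ * α := by positivity
  have hgpow : ∀ (k : ℕ) (e : ℝ), (gp G γ k) ^ e = G ^ (γ ^ k * e) := by
    intro k e; rw [gp, ← Real.rpow_mul hG0.le]
  have h1 : li ^ (τ*α) ≤ 2 ^ α * G ^ (γ^m1 * (τ*α)) := by
    calc li ^ (τ*α) ≤ (2 * gp G γ m1) ^ (τ*α) :=
          Real.rpow_le_rpow hli0 hli2 hτα
    _ = 2 ^ (τ*α) * (gp G γ m1) ^ (τ*α) :=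
          Real.mul_rpow (by norm_num) (hgp m1).le
    _ ≤ 2 ^ α * (gp G γ m1) ^ (τ*α) := by
          exact mul_le_mul_of_nonneg_right
            (Real.rpow_le_rpow_of_exponent_le (by norm_num) (by nlinarith))
            (Real.rpow_nonneg (hgp m1).le (τ*α))
    _ = 2 ^ α * G ^ (γ^m1 * (τ*α)) := by rw [hgpow]
  have h2 : dji ^ α ≤ 2 ^ α * G ^ (γ^q * α) := by
    calc dji ^ α ≤ (2 * gp G γ q) ^ α := Real.rpow_le_rpow hd0 hd hα0.le
    _ = 2 ^ α * (gp G γ q) ^ α := Real.mul_rpow (by norm_num) (hgp q).le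
    _ = 2 ^ α * G ^ (γ^q * α) := by rw [hgpow]
  have hE1pos : (0:ℝ) < G ^ (γ^m1 * (τ*α)) * G ^ (γ^q * α) := by positivity
  have hLHS : li ^ (τ*α) * dji ^ α ≤
      (2^α * 2^α) * (G ^ (γ^m1 * (τ*α)) * G ^ (γ^q * α)) := by
    calc li ^ (τ*α) * dji ^ α
        ≤ (2^α * G ^ (γ^m1 * (τ*α))) * (2^α * G ^ (γ^q * α)) :=
          mul_le_mul h1 h2 (Real.rpow_nonneg hd0 α)
            (by positivity : (0:ℝ) ≤ 2 ^ α * G ^ (γ^m1 * (τ*α)))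
      _ = (2^α * 2^α) * (G ^ (γ^m1 * (τ*α)) * G ^ (γ^q * α)) :=
          mul_mul_mul_comm _ _ _ _
  have hmid : (2^α * 2^α) * (G ^ (γ^m1 * (τ*α)) * G ^ (γ^q * α)) <
      β * (G ^ (γ^n)) ^ α * (G ^ (γ^m1 * (τ*α)) * G ^ (γ^q * α)) :=
    (mul_lt_mul_iff_left₀ hE1pos).2 hMβ
  have hcomb : β * (G ^ (γ^n)) ^ α * (G ^ (γ^m1 * (τ*α)) * G ^ (γ^q * α)) =
      β * G ^ (γ^n * α + (γ^m1 * (τ*α) + γ^q * α)) := by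
    rw [← Real.rpow_mul hG0.le, ← Real.rpow_add hG0, mul_assoc, ← Real.rpow_add hG0]
  have hexp : γ^n * α + (γ^m1 * (τ*α) + γ^q * α) ≤ γ^m2 * (τ*α) + γ^m1 * α := by
    nlinarith [mul_le_mul_of_nonneg_right hq hα0.le]
  have hup : β * G ^ (γ^n * α + (γ^m1 * (τ*α) + γ^q * α)) ≤
      β * G ^ (γ^m2 * (τ*α) + γ^m1 * α) := by
    exact mul_le_mul_of_nonneg_left (Real.rpow_le_rpow_of_exponent_le hG1 hexp) hβ.le
  have h3 : G ^ (γ^m2 * (τ*α)) ≤ lj ^ (τ*α) := by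
    rw [← hgpow]; exact Real.rpow_le_rpow (hgp m2).le hlj hτα
  have h4 : G ^ (γ^m1 * α) ≤ li ^ α := by
    rw [← hgpow]; exact Real.rpow_le_rpow (hgp m1).le hli1 hα0.le
  have hRHS : β * G ^ (γ^m2 * (τ*α) + γ^m1 * α) ≤ β * lj ^ (τ*α) * li ^ α := by
    rw [Real.rpow_add hG0]
    calc β * (G ^ (γ^m2 * (τ*α)) * G ^ (γ^m1 * α))
        ≤ β * (lj ^ (τ*α) * li ^ α) :=
          mul_le_mul_of_nonneg_left
            (mul_le_mul h3 h4 (by positivity) (Real.rpow_nonneg hlj0 (τ*α))) hβ.le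
      _ = β * lj ^ (τ*α) * li ^ α := (mul_assoc _ _ _).symm
  calc li ^ (τ*α) * dji ^ α
      ≤ (2^α * 2^α) * (G ^ (γ^m1 * (τ*α)) * G ^ (γ^q * α)) := hLHS
    _ < β * (G ^ (γ^n)) ^ α * (G ^ (γ^m1 * (τ*α)) * G ^ (γ^q * α)) := hmid
    _ = β * G ^ (γ^n * α + (γ^m1 * (τ*α) + γ^q * α)) := hcomb
    _ ≤ β * G ^ (γ^m2 * (τ*α) + γ^m1 * α) := hup
    _ ≤ β * lj ^ (τ*α) * li ^ α := hRHS

/-- Core interference disjunction for four distinct points of the construction. -/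
lemma coreIneq {G γ τ α β : ℝ} {n : ℕ}
    (hγ0 : 0 < γ) (hγ4 : γ ≤ 1/4) (hγτ : 2*γ ≤ τ) (hγτ' : 2*γ ≤ 1 - τ)
    (hG1 : 1 ≤ G) (hM2 : 2 ≤ G ^ (γ ^ n)) (hα0 : 0 < α)
    (hβ : 0 < β) (hMβ : (2:ℝ)^α * (2:ℝ)^α < β * (G ^ (γ ^ n)) ^ α)
    {a1 a2 a3 a4 : ℕ} (h1 : a1 < n) (h2 : a2 < n) (h3 : a3 < n) (h4 : a4 < n)
    (d12 : a1 ≠ a2) (d13 : a1 ≠ a3) (d14 : a1 ≠ a4) (d23 : a2 ≠ a3)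
    (d24 : a2 ≠ a4) (d34 : a3 ≠ a4) :
    |xp G γ a1 - xp G γ a2| ^ (τ*α) / |xp G γ a1 - xp G γ a2| ^ α <
      β * (|xp G γ a3 - xp G γ a4| ^ (τ*α) / |xp G γ a3 - xp G γ a2| ^ α) ∨
    |xp G γ a3 - xp G γ a4| ^ (τ*α) / |xp G γ a3 - xp G γ a4| ^ α <
      β * (|xp G γ a1 - xp G γ a2| ^ (τ*α) / |xp G γ a1 - xp G γ a4| ^ α) := by
  have hτ0 : 0 < τ := by linarith
  have hτ1 : τ ≤ 1 := by linarith
  have B12 := abs_xp_bounds hγ0 hγ4 hG1 hM2 d12 h1 h2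
  have B34 := abs_xp_bounds hγ0 hγ4 hG1 hM2 d34 h3 h4
  have B32 := abs_xp_bounds hγ0 hγ4 hG1 hM2 d23.symm h3 h2
  have B14 := abs_xp_bounds hγ0 hγ4 hG1 hM2 d14 h1 h4
  have hgp : ∀ k : ℕ, (0:ℝ) < gp G γ k := fun k => Real.rpow_pos_of_pos (by linarith) _
  set li := |xp G γ a1 - xp G γ a2| with hli
  set lj := |xp G γ a3 - xp G γ a4| with hlj
  set dji := |xp G γ a3 - xp G γ a2| with hdji
  set dij := |xp G γ a1 - xp G γ a4| with hdij
  have hli_pos : 0 < li := lt_of_lt_of_le (hgp _) B12.1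
  have hlj_pos : 0 < lj := lt_of_lt_of_le (hgp _) B34.1
  have hdji_pos : 0 < dji := lt_of_lt_of_le (hgp _) B32.1
  have hdij_pos : 0 < dij := lt_of_lt_of_le (hgp _) B14.1
  rcases expClaim hγ0 hγτ hγτ' h1 h3 d12 d13 d14 d23 d24 d34 with hc | hc
  · left
    rw [← mul_div_assoc, div_lt_div_iff₀ (Real.rpow_pos_of_pos hli_pos α)
      (Real.rpow_pos_of_pos hdji_pos α)]
    exact keyIneq hG1 hα0 hτ0 hτ1 hβ hMβ hc B12.1 B12.2 B34.1 hdji_pos.le B32.2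
  · right
    rw [← mul_div_assoc, div_lt_div_iff₀ (Real.rpow_pos_of_pos hlj_pos α)
      (Real.rpow_pos_of_pos hdij_pos α)]
    exact keyIneq hG1 hα0 hτ0 hτ1 hβ hMβ hc B34.1 B34.2 B12.1 hdij_pos.le B14.2

lemma dist_emb (a b : ℝ) : dist (emb a) (emb b) = |a - b| := by
  rw [EuclideanSpace.dist_eq]
  simp [emb, Fin.sum_univ_two, Real.dist_eq]
  rw [Real.sqrt_sq_eq_abs]

lemma emb_inj : Function.Injective emb := by
  intro a b h
  have h2 := dist_emb a b
  rw [h, dist_self] at h2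
  have := abs_eq_zero.mp h2.symm
  linarith [this]

set_option maxHeartbeats 2000000 in
/-- For any oblivious power scheme `P_τ` there are line networks of
arbitrarily large diversity `Δ` on `n = Ω(log log Δ)` points in which no two node-disjoint
links can be simultaneously `P_τ`-feasible; consequently, any partition of (an arbitrarily
oriented) spanning tree of the pointset into pairwise node-disjoint `P_τ`-feasible sets has
exactly `n - 1` parts. -/
theorem oblivious_power_rate_lower_bound (α β τ : ℝ)
    (hα : 2 < α) (hβ : 0 < β) (hτ : τ ∈ Set.Ioo (0 : ℝ) 1) :
    ∃ c : ℝ, 0 < c ∧ ∀ Δ₀ : ℝ, 0 < Δ₀ →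
      ∃ R : Finset ℝ, 2 ≤ R.card ∧ Δ₀ < ptDiversity R ∧
        c * Real.log (Real.log (ptDiversity R)) ≤ (R.card : ℝ) ∧
        (∀ T : Finset Link,
           (∀ i ∈ T, i.1 ∈ R.image emb ∧ i.2 ∈ R.image emb ∧ i.1 ≠ i.2) →
           (∀ i ∈ T, ∀ j ∈ T, i ≠ j → NodeDisjoint i j) →
           PFeasible α β T (oblPower α τ) → T.card ≤ 1) ∧
        (∀ S : Finset Link, IsSpanningTreeLinks (R.image emb) S →
           ∀ col : Link → ℕ,
             (∀ k : ℕ,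
                (∀ i ∈ S.filter (fun i => col i = k), ∀ j ∈ S.filter (fun i => col i = k),
                   i ≠ j → NodeDisjoint i j) ∧
                PFeasible α β (S.filter fun i => col i = k) (oblPower α τ)) →
             (S.image col).card = R.card - 1) := by
  obtain ⟨hτ0, hτ1⟩ := hτ
  have hα0 : (0:ℝ) < α := by linarith
  set γ : ℝ := min τ (1-τ) / 2 with hγdef
  have hγ0 : 0 < γ := by
    have h := lt_min hτ0 (by linarith : (0:ℝ) < 1 - τ)
    rw [hγdef]; linarith
  have hγτ : 2*γ ≤ τ := by
    have := min_le_left τ (1-τ); rw [hγdef]; linarith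
  have hγτ' : 2*γ ≤ 1 - τ := by
    have := min_le_right τ (1-τ); rw [hγdef]; linarith
  have hγ4 : γ ≤ 1/4 := by
    rcases le_total τ (1-τ) with h | h
    · rw [hγdef, min_eq_left h]; linarith
    · rw [hγdef, min_eq_right h]; linarith
  set c0 : ℝ := β ^ (α⁻¹) with hc0def
  have hc00 : 0 < c0 := Real.rpow_pos_of_pos hβ _
  set M : ℝ := 4 + 4 / c0 with hMdef
  have hM4 : 4 < M := by
    have h : 0 < 4 / c0 := by positivity
    rw [hMdef]; linarith
  have hM0 : (0:ℝ) < M := by linarith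
  have hM1 : (1:ℝ) < M := by linarith
  have hlogM : 0 < Real.log M := Real.log_pos hM1
  have hloglogM : 0 < Real.log (Real.log M) := by
    apply Real.log_pos
    rw [show (1:ℝ) = Real.log (Real.exp 1) by rw [Real.log_exp]]
    apply Real.log_lt_log (Real.exp_pos 1)
    have he := Real.exp_one_lt_d9
    norm_num at he
    linarith
  have hγinv1 : 1 < γ⁻¹ := (one_lt_inv₀ hγ0).2 (by linarith)
  have hlogγ : 0 < Real.log γ⁻¹ := Real.log_pos hγinv1
  set A : ℝ := Real.log 2 + Real.log γ⁻¹ + Real.log (Real.log M) + 1 with hAdef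
  have hlog2pos : 0 < Real.log 2 := Real.log_pos (by norm_num)
  have hA0 : 0 < A := by rw [hAdef]; linarith
  refine ⟨A⁻¹, inv_pos.2 hA0, ?_⟩
  intro Δ₀ hΔ₀
  set X : ℝ := 2 * Real.log (Δ₀ + 2) / Real.log M with hXdef
  have hX0 : 0 ≤ X := by
    apply div_nonneg _ hlogM.le
    have h : (0:ℝ) ≤ Real.log (Δ₀+2) := Real.log_nonneg (by linarith)
    linarith
  set n : ℕ := max 4 (⌈X⌉₊ + 1) with hndef
  have hn4 : 4 ≤ n := le_max_left _ _
  have hnX : X ≤ (n:ℝ) := by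
    calc X ≤ (⌈X⌉₊ : ℝ) := Nat.le_ceil X
    _ ≤ (n:ℝ) := by exact_mod_cast (show ⌈X⌉₊ ≤ n by omega)
  set G : ℝ := M ^ ((γ⁻¹ ^ n : ℝ)) with hGdef
  have hγinvpow : (0:ℝ) < γ⁻¹ ^ n := pow_pos (inv_pos.2 hγ0) n
  have hG1 : 1 ≤ G := Real.one_le_rpow hM1.le hγinvpow.le
  have hG0 : (0:ℝ) < G := by linarith
  have hMeq : G ^ (γ ^ n) = M := by
    rw [hGdef, ← Real.rpow_mul hM0.le, ← mul_pow, inv_mul_cancel₀ hγ0.ne',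
      one_pow, Real.rpow_one]
  have hM2' : 2 ≤ G ^ (γ^n) := by rw [hMeq]; linarith
  have hMβ : (2:ℝ)^α * (2:ℝ)^α < β * (G ^ (γ^n))^α := by
    rw [hMeq]
    have h44 : (2:ℝ)^α * (2:ℝ)^α = (4:ℝ)^α := by
      rw [← Real.mul_rpow (by norm_num) (by norm_num)]; norm_num
    rw [h44]
    have hlt : (4 / c0 : ℝ) < M := by rw [hMdef]; linarith
    have h2 : ((4:ℝ)/c0)^α < M^α := Real.rpow_lt_rpow (by positivity) hlt hα0
    have h3 : ((4:ℝ)/c0)^α = (4:ℝ)^α / β := by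
      rw [Real.div_rpow (by norm_num) hc00.le]
      congr 1
      rw [hc0def, ← Real.rpow_mul hβ.le, inv_mul_cancel₀ (ne_of_gt hα0), Real.rpow_one]
    have h5 : β * ((4:ℝ)^α / β) = (4:ℝ)^α := by field_simp
    calc (4:ℝ)^α = β * ((4:ℝ)^α/β) := h5.symm
      _ = β * (((4:ℝ)/c0)^α) := by rw [h3]
      _ < β * M^α := (mul_lt_mul_iff_right₀ hβ).2 h2
  have hGΔ : (Δ₀ + 2)^2 ≤ G := by
    have h2γinv : (2:ℝ) ≤ γ⁻¹ := by
      have h2γ : 2 * γ ≤ 1 := by linarith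
      calc (2:ℝ) = 2*γ*γ⁻¹ := by field_simp
        _ ≤ 1 * γ⁻¹ := mul_le_mul_of_nonneg_right h2γ (inv_nonneg.2 hγ0.le)
        _ = γ⁻¹ := one_mul _
    have hn2 : (n:ℝ) ≤ γ⁻¹ ^ n := by
      have hnat := Nat.lt_two_pow_self (n := n)
      have h1 : (n:ℝ) ≤ (2:ℝ)^n := by exact_mod_cast hnat.le
      have h2 : (2:ℝ)^n ≤ γ⁻¹^n := pow_le_pow_left₀ (by norm_num) h2γinv n
      linarith
    have hgeX : M ^ X ≤ G := by
      rw [hGdef]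
      exact Real.rpow_le_rpow_of_exponent_le hM1.le (le_trans hnX hn2)
    have hMX : M ^ X = (Δ₀+2)^2 := by
      rw [Real.rpow_def_of_pos hM0]
      have h : Real.log M * X = 2 * Real.log (Δ₀ + 2) := by
        rw [hXdef]; field_simp
      rw [h, two_mul, Real.exp_add, Real.exp_log (by linarith), sq]
    linarith [hMX ▸ hgeX]
  -- the point set
  set R : Finset ℝ := (Finset.range n).image (xp G γ) with hRdef
  have hmono := xp_strictMono (G := G) (γ := γ) hG1
  have hxinj := hmono.injective
  have hcard : R.card = n := by
    rw [hRdef, Finset.card_image_of_injective _ hxinj, Finset.card_range]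
  have hmemR : ∀ t ∈ R, ∃ a, a < n ∧ xp G γ a = t := by
    intro t ht
    rw [hRdef] at ht
    simp only [Finset.mem_image, Finset.mem_range] at ht
    obtain ⟨a, ha, rfl⟩ := ht
    exact ⟨a, ha, rfl⟩
  have hmem : ∀ p ∈ R.image emb, ∃ a, a < n ∧ emb (xp G γ a) = p := by
    intro p hp
    simp only [Finset.mem_image] at hp
    obtain ⟨t, ht, rfl⟩ := hp
    obtain ⟨a, ha, rfl⟩ := hmemR t ht
    exact ⟨a, ha, rfl⟩
  have hgp : ∀ k : ℕ, (0:ℝ) < gp G γ k := fun k => Real.rpow_pos_of_pos hG0 _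
  -- first bullet
  have key1 : ∀ T : Finset Link,
      (∀ i ∈ T, i.1 ∈ R.image emb ∧ i.2 ∈ R.image emb ∧ i.1 ≠ i.2) →
      (∀ i ∈ T, ∀ j ∈ T, i ≠ j → NodeDisjoint i j) →
      PFeasible α β T (oblPower α τ) → T.card ≤ 1 := by
    intro T hT hdisj hfeas
    by_contra hcard2
    push_neg at hcard2
    obtain ⟨i, hi, j, hj, hij⟩ := Finset.one_lt_card.1 hcard2
    obtain ⟨hi1, hi2, hi12⟩ := hT i hi
    obtain ⟨hj1, hj2, hj12⟩ := hT j hj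
    obtain ⟨a1, ha1, e1⟩ := hmem _ hi1
    obtain ⟨a2, ha2, e2⟩ := hmem _ hi2
    obtain ⟨a3, ha3, e3⟩ := hmem _ hj1
    obtain ⟨a4, ha4, e4⟩ := hmem _ hj2
    obtain ⟨nd1, nd2, nd3, nd4⟩ := hdisj i hi j hj hij
    have d12 : a1 ≠ a2 := fun h => hi12 (by rw [← e1, ← e2, h])
    have d13 : a1 ≠ a3 := fun h => nd1 (by rw [← e1, ← e3, h])
    have d14 : a1 ≠ a4 := fun h => nd2 (by rw [← e1, ← e4, h])
    have d23 : a2 ≠ a3 := fun h => nd3 (by rw [← e2, ← e3, h])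
    have d24 : a2 ≠ a4 := fun h => nd4 (by rw [← e2, ← e4, h])
    have d34 : a3 ≠ a4 := fun h => hj12 (by rw [← e3, ← e4, h])
    have hterm : ∀ k ∈ T.erase i, 0 ≤ oblPower α τ k / dist k.1 i.2 ^ α := fun k _ =>
      div_nonneg (Real.rpow_nonneg dist_nonneg _) (Real.rpow_nonneg dist_nonneg _)
    have hfi := hfeas.2 i hi
    have hsingle_i := Finset.single_le_sum (f := fun k => oblPower α τ k / dist k.1 i.2 ^ α)
      hterm (Finset.mem_erase.2 ⟨Ne.symm hij, hj⟩)
    have hIi : β * (oblPower α τ j / dist j.1 i.2 ^ α) ≤ oblPower α τ i / len i ^ α :=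
      le_trans (mul_le_mul_of_nonneg_left hsingle_i hβ.le) hfi
    have hterm' : ∀ k ∈ T.erase j, 0 ≤ oblPower α τ k / dist k.1 j.2 ^ α := fun k _ =>
      div_nonneg (Real.rpow_nonneg dist_nonneg _) (Real.rpow_nonneg dist_nonneg _)
    have hfj := hfeas.2 j hj
    have hsingle_j := Finset.single_le_sum (f := fun k => oblPower α τ k / dist k.1 j.2 ^ α)
      hterm' (Finset.mem_erase.2 ⟨hij, hi⟩)
    have hIj : β * (oblPower α τ i / dist i.1 j.2 ^ α) ≤ oblPower α τ j / len j ^ α :=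
      le_trans (mul_le_mul_of_nonneg_left hsingle_j hβ.le) hfj
    simp only [oblPower, len] at hIi hIj
    rw [← e1, ← e2, ← e3, ← e4] at hIi hIj
    simp only [dist_emb] at hIi hIj
    rcases coreIneq hγ0 hγ4 hγτ hγτ' hG1 hM2' hα0 hβ hMβ ha1 ha2 ha3 ha4
      d12 d13 d14 d23 d24 d34 with hc | hc
    · linarith
    · linarith
  -- diversity facts
  have hOffmem : ∀ a b : ℕ, a < n → b < n → a ≠ b →
      ((xp G γ a, xp G γ b) : ℝ × ℝ) ∈ R.offDiag := by
    intro a b ha hb hab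
    rw [Finset.mem_offDiag, hRdef]
    exact ⟨Finset.mem_image.2 ⟨a, Finset.mem_range.2 ha, rfl⟩,
      Finset.mem_image.2 ⟨b, Finset.mem_range.2 hb, rfl⟩,
      fun h => hab (hxinj h)⟩
  have hOffNe : R.offDiag.Nonempty :=
    ⟨_, hOffmem 0 (n-1) (by omega) (by omega) (by omega)⟩
  have hdiv : ptDiversity R = R.offDiag.sup' hOffNe (fun p => |p.1 - p.2|) /
      R.offDiag.inf' hOffNe (fun p => |p.1 - p.2|) := by
    rw [ptDiversity, dif_pos hOffNe]
  set sup := R.offDiag.sup' hOffNe (fun p => |p.1 - p.2|) with hsupdef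
  set inf := R.offDiag.inf' hOffNe (fun p => |p.1 - p.2|) with hinfdef
  have habs := fun {a b : ℕ} (hab : a ≠ b) (ha : a < n) (hb : b < n) =>
    abs_xp_bounds (G := G) (γ := γ) hγ0 hγ4 hG1 hM2' hab ha hb
  have hsup_ge : gp G γ 0 ≤ sup := by
    have h := (habs (show (0:ℕ) ≠ n-1 by omega) (by omega) (by omega)).1
    have hmin : min 0 (n-1) = 0 := by omega
    rw [hmin] at h
    exact le_trans h (Finset.le_sup' (f := fun p : ℝ × ℝ => |p.1 - p.2|)
      (hOffmem 0 (n-1) (by omega) (by omega) (by omega)))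
  have hsup_le : sup ≤ 2 * gp G γ 0 := by
    apply Finset.sup'_le
    intro p hp
    rw [Finset.mem_offDiag] at hp
    obtain ⟨hp1, hp2, hpne⟩ := hp
    obtain ⟨a, ha, ea⟩ := hmemR _ hp1
    obtain ⟨b, hb, eb⟩ := hmemR _ hp2
    have hab : a ≠ b := fun h => hpne (by rw [← ea, ← eb, h])
    have h := (habs hab ha hb).2
    rw [ea, eb] at h
    have h2 : gp G γ (min a b) ≤ gp G γ 0 := gp_anti hγ0 hγ4 hG1 (Nat.zero_le _)
    linarith
  have hxstep : |xp G γ (n-2) - xp G γ (n-1)| = gp G γ (n-2) := by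
    have h1 : xp G γ (n-1) = xp G γ (n-2) + gp G γ (n-2) := by
      have h : n - 1 = (n-2) + 1 := by omega
      rw [h, xp, Finset.sum_range_succ, ← xp]
    rw [h1, abs_sub_comm, abs_of_nonneg (by linarith [hgp (n-2)])]
    ring
  have hinf_le : inf ≤ gp G γ (n-2) := by
    have := Finset.inf'_le (f := fun p : ℝ × ℝ => |p.1 - p.2|)
      (hOffmem (n-2) (n-1) (by omega) (by omega) (by omega))
    rw [hinfdef]
    exact le_trans this (le_of_eq hxstep)
  have hinf_ge : gp G γ (n-2) ≤ inf := by
    apply Finset.le_inf'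
    intro p hp
    rw [Finset.mem_offDiag] at hp
    obtain ⟨hp1, hp2, hpne⟩ := hp
    obtain ⟨a, ha, ea⟩ := hmemR _ hp1
    obtain ⟨b, hb, eb⟩ := hmemR _ hp2
    have hab : a ≠ b := fun h => hpne (by rw [← ea, ← eb, h])
    have h := (habs hab ha hb).1
    rw [ea, eb] at h
    have h2 : gp G γ (n-2) ≤ gp G γ (min a b) :=
      gp_anti hγ0 hγ4 hG1 (by omega)
    linarith
  have hinf_pos : 0 < inf := lt_of_lt_of_le (hgp _) hinf_ge
  clear hRdef hsupdef hinfdef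
  clear_value R sup inf
  have hr1 : gp G γ 0 / gp G γ (n-2) = G ^ ((1:ℝ) - γ^(n-2)) := by
    rw [gp, gp, pow_zero, ← Real.rpow_sub hG0]
  have hhalf : (2:ℝ)⁻¹ ≤ 1 - γ^(n-2) := by
    have h : γ^(n-2) ≤ γ^1 := pow_le_pow_of_le_one hγ0.le (by linarith) (by omega)
    rw [pow_one] at h; linarith
  have h2exp : G ^ ((2:ℝ)⁻¹) ≤ G ^ ((1:ℝ) - γ^(n-2)) :=
    Real.rpow_le_rpow_of_exponent_le hG1 hhalf
  have h3 : Δ₀ + 2 ≤ G ^ ((2:ℝ)⁻¹) := by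
    have h4 := Real.rpow_le_rpow (by positivity : (0:ℝ) ≤ (Δ₀+2)^2) hGΔ
      (by norm_num : (0:ℝ) ≤ (2:ℝ)⁻¹)
    have h5 : ((Δ₀+2)^2 : ℝ) ^ ((2:ℝ)⁻¹) = Δ₀ + 2 := by
      have h := Real.pow_rpow_inv_natCast (show (0:ℝ) ≤ Δ₀+2 by linarith)
        (two_ne_zero)
      push_cast at h
      exact h
    rw [h5] at h4
    exact h4
  have hdivlow : Δ₀ + 2 ≤ ptDiversity R := by
    have hchain : gp G γ 0 / gp G γ (n-2) ≤ sup / inf :=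
      div_le_div₀ (le_trans (hgp 0).le hsup_ge) hsup_ge hinf_pos hinf_le
    rw [hr1] at hchain
    rw [hdiv]
    linarith
  have hdivhigh : ptDiversity R ≤ 2 * G := by
    rw [hdiv]
    have h1 : sup / inf ≤ (2 * gp G γ 0) / gp G γ (n-2) :=
      div_le_div₀ (by linarith [hgp 0]) hsup_le (hgp _) hinf_ge
    have h2 : (2 * gp G γ 0) / gp G γ (n-2) ≤ 2 * gp G γ 0 :=
      div_le_self (by linarith [hgp 0]) (gp_one_le hγ0 hG1 _)
    have h3 : gp G γ 0 = G := by rw [gp, pow_zero, Real.rpow_one]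
    rw [h3] at h1 h2
    linarith
  have hlogΔpos : 0 < Real.log (ptDiversity R) := Real.log_pos (by linarith)
  have hlogG : Real.log G = γ⁻¹^n * Real.log M := by
    rw [hGdef, Real.log_rpow hM0]
  clear hγdef hc0def hMdef hXdef hndef hGdef
  clear_value γ c0 M X n G
  have hpow1 : (1:ℝ) ≤ γ⁻¹^n := one_le_pow₀ hγinv1.le
  have hppinv : (0:ℝ) < γ⁻¹^n := pow_pos (inv_pos.2 hγ0) n
  have hlogΔ : Real.log (ptDiversity R) ≤ 2 * (γ⁻¹^n * Real.log M) := by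
    have hl1 : Real.log (ptDiversity R) ≤ Real.log (2 * G) :=
      Real.log_le_log (by linarith) hdivhigh
    have hl2 : Real.log (2 * G) = Real.log 2 + Real.log G :=
      Real.log_mul (by norm_num) (by linarith)
    have hl3 : Real.log 2 ≤ Real.log M := Real.log_le_log (by norm_num) (by linarith)
    have hl4 : Real.log M ≤ γ⁻¹^n * Real.log M :=
      le_mul_of_one_le_left hlogM.le hpow1
    rw [hl2, hlogG] at hl1
    linarith
  have hloglog : Real.log (Real.log (ptDiversity R)) ≤
      Real.log 2 + ((n:ℝ) * Real.log γ⁻¹ + Real.log (Real.log M)) := by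
    calc Real.log (Real.log (ptDiversity R))
        ≤ Real.log (2 * (γ⁻¹^n * Real.log M)) := Real.log_le_log hlogΔpos hlogΔ
      _ = Real.log 2 + Real.log (γ⁻¹^n * Real.log M) :=
          Real.log_mul (by norm_num) (mul_pos hppinv hlogM).ne'
      _ = Real.log 2 + (Real.log (γ⁻¹^n) + Real.log (Real.log M)) := by
          rw [Real.log_mul hppinv.ne' hlogM.ne']
      _ = Real.log 2 + ((n:ℝ) * Real.log γ⁻¹ + Real.log (Real.log M)) := by
          rw [Real.log_pow]
  have hn1 : (1:ℝ) ≤ (n:ℝ) := by exact_mod_cast Nat.one_le_iff_ne_zero.2 (by omega)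
  refine ⟨R, ?_, ?_, ?_, key1, ?_⟩
  · rw [hcard]; omega
  · linarith
  · rw [hcard]
    have hbound : Real.log (Real.log (ptDiversity R)) ≤ (n:ℝ) * A := by
      have p1 : Real.log 2 ≤ (n:ℝ) * Real.log 2 :=
        le_mul_of_one_le_left hlog2pos.le hn1
      have p2 : Real.log (Real.log M) ≤ (n:ℝ) * Real.log (Real.log M) :=
        le_mul_of_one_le_left hloglogM.le hn1
      calc Real.log (Real.log (ptDiversity R))
          ≤ (n:ℝ) * Real.log 2 + (n:ℝ) * Real.log γ⁻¹ +
            (n:ℝ) * Real.log (Real.log M) + (n:ℝ) := by linarith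
        _ = (n:ℝ) * A := by rw [hAdef]; ring
    calc A⁻¹ * Real.log (Real.log (ptDiversity R)) ≤ A⁻¹ * ((n:ℝ) * A) :=
        mul_le_mul_of_nonneg_left hbound (inv_nonneg.2 hA0.le)
    _ = (n:ℝ) := by
        rw [mul_comm (n:ℝ) A, ← mul_assoc, inv_mul_cancel₀ hA0.ne', one_mul]
  · intro S hS col hcol
    have h1 : ∀ k, (S.filter fun i => col i = k).card ≤ 1 := by
      intro k
      exact key1 _ (fun i hi => hS.1 i (Finset.mem_filter.1 hi).1) (hcol k).1 (hcol k).2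
    have hinjOn : Set.InjOn col ↑S := by
      intro i hi j hj hc
      by_contra hne
      have h2 : 1 < (S.filter fun x => col x = col j).card :=
        Finset.one_lt_card.2 ⟨i, Finset.mem_filter.2 ⟨Finset.mem_coe.1 hi, hc⟩,
          j, Finset.mem_filter.2 ⟨Finset.mem_coe.1 hj, rfl⟩, hne⟩
      have h3 := h1 (col j)
      omega
    rw [Finset.card_image_of_injOn hinjOn]
    have h3 := hS.2.1
    rw [Finset.card_image_of_injective _ emb_inj] at h3
    omega
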